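/- For a commutative Krasner hyperring R with unit, Spec(R) is homeomorphic to Spec(R/nil(R)), where nil(R) is the hyperideal of nilpotent elements. -/

import Mathlib

universe u

/-- A commutative Krasner hyperring with unit: `(R,+)` is a canonical hypergroup
(multivalued addition), `(R,·)` is a commutative monoid, `·` distributes over `+`
and `0` is absorbing. -/
structure KHR (R : Type u) where
  hadd : R → R → Set R
  mul : R → R → R
  zero : R
  one : R
  neg : R → R
  hadd_comm : ∀ a b, hadd a b = hadd b a
  hadd_assoc : ∀ a b c, (⋃ x ∈ hadd a b, hadd x c) = ⋃ y ∈ hadd b c, hadd a y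
  zero_hadd : ∀ a, hadd zero a = {a}
  neg_mem : ∀ a, zero ∈ hadd a (neg a)
  neg_unique : ∀ a b, zero ∈ hadd a b → b = neg a
  reversible : ∀ a b c, c ∈ hadd a b → b ∈ hadd (neg a) c
  mul_assoc : ∀ a b c, mul (mul a b) c = mul a (mul b c)
  mul_comm : ∀ a b, mul a b = mul b a
  one_mul : ∀ a, mul one a = a
  zero_mul : ∀ a, mul zero a = zero
  distrib : ∀ a b c, (fun x => mul a x) '' hadd b c = hadd (mul a b) (mul a c)

namespace KHR

variable {R : Type u} {S : Type u} {T : Type u} {Q : Type u}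

/-- Sum of two subsets: `A + B = ⋃ {a + b : a ∈ A, b ∈ B}`. -/
def sumSet (H : KHR R) (A B : Set R) : Set R := ⋃ a ∈ A, ⋃ b ∈ B, H.hadd a b

/-- The coset `x + I`. -/
def coset (H : KHR R) (x : R) (I : Set R) : Set R := H.sumSet {x} I

/-- Hyperideal of a Krasner hyperring. -/
def IsHyperideal (H : KHR R) (I : Set R) : Prop :=
  H.zero ∈ I ∧ (∀ a ∈ I, ∀ b ∈ I, H.hadd a b ⊆ I) ∧ (∀ a ∈ I, H.neg a ∈ I) ∧
    ∀ r : R, ∀ a ∈ I, H.mul r a ∈ I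

/-- Prime hyperideal. -/
def IsPrime (H : KHR R) (P : Set R) : Prop :=
  H.IsHyperideal P ∧ P ≠ Set.univ ∧ ∀ a b : R, H.mul a b ∈ P → a ∈ P ∨ b ∈ P

/-- Maximal hyperideal. -/
def IsMaximal (H : KHR R) (M : Set R) : Prop :=
  H.IsHyperideal M ∧ M ≠ Set.univ ∧ ∀ J : Set R, H.IsHyperideal J → M ⊂ J → J = Set.univ

/-- The prime spectrum. -/
def Spectrum (H : KHR R) : Type u := {P : Set R // H.IsPrime P}

/-- The Zariski-closed set attached to a set of elements. -/
def V (H : KHR R) (s : Set R) : Set H.Spectrum := {P | s ⊆ P.1}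

/-- The basic Zariski-open set attached to an element. -/
def W (H : KHR R) (x : R) : Set H.Spectrum := {P | x ∉ P.1}

/-- The hyperideal generated by a set. -/
def genIdeal (H : KHR R) (s : Set R) : Set R := ⋂₀ {I | H.IsHyperideal I ∧ s ⊆ I}

/-- The product `IJ` of two hyperideals. -/
def mulIdeal (H : KHR R) (I J : Set R) : Set R :=
  H.genIdeal {x | ∃ a ∈ I, ∃ b ∈ J, x = H.mul a b}

/-- The Zariski topology on the prime spectrum. -/
def zariski (H : KHR R) : TopologicalSpace H.Spectrum :=
  TopologicalSpace.generateFrom {U | ∃ I : Set R, H.IsHyperideal I ∧ U = (H.V I)ᶜ}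

/-- Powers of an element. -/
def pow (H : KHR R) (x : R) : ℕ → R
  | 0 => H.one
  | n+1 => H.mul x (H.pow x n)

/-- The nilradical. -/
def nil (H : KHR R) : Set R := {x | ∃ n : ℕ, H.pow x (n+1) = H.zero}

/-- The radical of a hyperideal. -/
def radical (H : KHR R) (I : Set R) : Set R := {x | ∃ n : ℕ, H.pow x (n+1) ∈ I}

/-- Units. -/
def IsUnit (H : KHR R) (x : R) : Prop := ∃ y, H.mul x y = H.one

/-- Good homomorphism of Krasner hyperrings. -/
structure GoodHom (H : KHR R) (K : KHR S) where
  toFun : R → S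
  map_hadd : ∀ a b, toFun '' H.hadd a b = K.hadd (toFun a) (toFun b)
  map_mul : ∀ a b, toFun (H.mul a b) = K.mul (toFun a) (toFun b)
  map_zero : toFun H.zero = K.zero
  map_one : toFun H.one = K.one

theorem comap_prime (H : KHR R) (K : KHR S) (f : GoodHom H K) {P : Set S}
    (hP : K.IsPrime P) : H.IsPrime (f.toFun ⁻¹' P) := by
  obtain ⟨⟨h0, haddc, hneg, hmulc⟩, hne, hpr⟩ := hP
  refine ⟨⟨?_, ?_, ?_, ?_⟩, ?_, ?_⟩
  · show f.toFun H.zero ∈ P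
    rw [f.map_zero]; exact h0
  · intro a ha b hb c hc
    have : f.toFun c ∈ K.hadd (f.toFun a) (f.toFun b) := by
      rw [← f.map_hadd]; exact ⟨c, hc, rfl⟩
    exact haddc _ ha _ hb this
  · intro a ha
    have hz : K.zero ∈ K.hadd (f.toFun a) (f.toFun (H.neg a)) := by
      rw [← f.map_hadd, ← f.map_zero]
      exact ⟨H.zero, H.neg_mem a, rfl⟩
    have : f.toFun (H.neg a) = K.neg (f.toFun a) := K.neg_unique _ _ hz
    show f.toFun (H.neg a) ∈ P
    rw [this]; exact hneg _ ha
  · intro r a ha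
    show f.toFun (H.mul r a) ∈ P
    rw [f.map_mul]; exact hmulc _ _ ha
  · intro hU
    apply hne
    ext s
    simp only [Set.mem_univ, iff_true]
    have h1 : f.toFun H.one ∈ P := by
      have : H.one ∈ f.toFun ⁻¹' P := by rw [hU]; trivial
      exact this
    have : K.mul s (f.toFun H.one) ∈ P := hmulc s _ h1
    rwa [f.map_one, K.mul_comm, K.one_mul] at this
  · intro a b hab
    have : K.mul (f.toFun a) (f.toFun b) ∈ P := by rw [← f.map_mul]; exact hab
    exact hpr _ _ this

/-- The induced map on spectra. -/
def specMap (H : KHR R) (K : KHR S) (f : GoodHom H K) : K.Spectrum → H.Spectrum :=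
  fun P => ⟨f.toFun ⁻¹' P.1, comap_prime H K f P.2⟩

/-- `K` is the quotient hyperring of `H` by the hyperideal `I`, witnessed by the
canonical projection. -/
structure IsQuotient (H : KHR R) (K : KHR Q) (I : Set R) where
  hom : GoodHom H K
  surj : Function.Surjective hom.toFun
  fiber : ∀ x y, hom.toFun x = hom.toFun y ↔ H.coset x I = H.coset y I

/-- Strongly regular (equivalence) relation on a Krasner hyperring. -/
def StronglyRegular (H : KHR R) (ρ : R → R → Prop) : Prop :=
  Equivalence ρ ∧ ∀ a b c d, ρ a b → ρ c d →
    (∀ x ∈ H.hadd a c, ∀ y ∈ H.hadd b d, ρ x y) ∧ ρ (H.mul a c) (H.mul b d)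

/-- The fundamental relation `γ*`: the smallest strongly regular relation. -/
def gamma (H : KHR R) : R → R → Prop := fun x y => ∀ ρ, H.StronglyRegular ρ → ρ x y

/-- The zero class `γ*(0)` of the fundamental relation. -/
def gammaZero (H : KHR R) : Set R := {x | H.gamma x H.zero}



/-- The product of two Krasner hyperrings, with componentwise hyperoperations. -/
def prodKHR (H : KHR R) (K : KHR S) : KHR (R × S) where
  hadd a b := H.hadd a.1 b.1 ×ˢ K.hadd a.2 b.2
  mul a b := (H.mul a.1 b.1, K.mul a.2 b.2)
  zero := (H.zero, K.zero)
  one := (H.one, K.one)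
  neg a := (H.neg a.1, K.neg a.2)
  hadd_comm a b := by beta_reduce; rw [H.hadd_comm, K.hadd_comm]
  hadd_assoc a b c := by
    beta_reduce
    have h1 := H.hadd_assoc a.1 b.1 c.1
    have h2 := K.hadd_assoc a.2 b.2 c.2
    ext ⟨p, q⟩
    have e1 : p ∈ (⋃ x ∈ H.hadd a.1 b.1, H.hadd x c.1) ↔
        p ∈ ⋃ y ∈ H.hadd b.1 c.1, H.hadd a.1 y := by rw [h1]
    have e2 : q ∈ (⋃ x ∈ K.hadd a.2 b.2, K.hadd x c.2) ↔
        q ∈ ⋃ y ∈ K.hadd b.2 c.2, K.hadd a.2 y := by rw [h2]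
    simp only [Set.mem_iUnion, Set.mem_prod] at e1 e2 ⊢
    constructor
    · rintro ⟨⟨x1, x2⟩, ⟨⟨hx1, hx2⟩, hp, hq⟩⟩
      obtain ⟨y1, hy1, hp'⟩ := e1.1 ⟨x1, hx1, hp⟩
      obtain ⟨y2, hy2, hq'⟩ := e2.1 ⟨x2, hx2, hq⟩
      exact ⟨(y1, y2), ⟨hy1, hy2⟩, hp', hq'⟩
    · rintro ⟨⟨y1, y2⟩, ⟨⟨hy1, hy2⟩, hp, hq⟩⟩
      obtain ⟨x1, hx1, hp'⟩ := e1.2 ⟨y1, hy1, hp⟩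
      obtain ⟨x2, hx2, hq'⟩ := e2.2 ⟨y2, hy2, hq⟩
      exact ⟨(x1, x2), ⟨hx1, hx2⟩, hp', hq'⟩
  zero_hadd a := by
    beta_reduce
    rw [H.zero_hadd, K.zero_hadd, Set.singleton_prod_singleton]
  neg_mem a := ⟨H.neg_mem a.1, K.neg_mem a.2⟩
  neg_unique a b h := Prod.ext (H.neg_unique _ _ h.1) (K.neg_unique _ _ h.2)
  reversible a b c h := ⟨H.reversible _ _ _ h.1, K.reversible _ _ _ h.2⟩
  mul_assoc a b c := Prod.ext (H.mul_assoc _ _ _) (K.mul_assoc _ _ _)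
  mul_comm a b := Prod.ext (H.mul_comm _ _) (K.mul_comm _ _)
  one_mul a := Prod.ext (H.one_mul _) (K.one_mul _)
  zero_mul a := Prod.ext (H.zero_mul _) (K.zero_mul _)
  distrib a b c := by
    ext ⟨p, q⟩
    simp only [Set.mem_image, Set.mem_prod]
    constructor
    · rintro ⟨⟨x, y⟩, ⟨hx, hy⟩, h⟩
      obtain ⟨h1, h2⟩ := Prod.mk.injEq .. ▸ h
      constructor
      · rw [← H.distrib]; exact ⟨x, hx, h1⟩
      · rw [← K.distrib]; exact ⟨y, hy, h2⟩
    · rintro ⟨hp, hq⟩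
      rw [← H.distrib] at hp
      rw [← K.distrib] at hq
      obtain ⟨x, hx, hx'⟩ := hp
      obtain ⟨y, hy, hy'⟩ := hq
      exact ⟨(x, y), ⟨hx, hy⟩, by simp [hx', hy']⟩


end KHR


namespace KHR

variable {R : Type u} {Q : Type u}

lemma hyperideal_eq_univ_of_one_mem (H : KHR R) {I : Set R}
    (hI : H.IsHyperideal I) (h1 : H.one ∈ I) : I = Set.univ := by
  ext s
  simp only [Set.mem_univ, iff_true]
  have := hI.2.2.2 s H.one h1
  rwa [H.mul_comm, H.one_mul] at this

lemma prime_pow_mem (H : KHR R) {P : Set R} (hP : H.IsPrime P) {x : R} :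
    ∀ n : ℕ, H.pow x (n+1) ∈ P → x ∈ P := by
  intro n
  induction n with
  | zero =>
    intro h
    rcases hP.2.2 x (H.pow x 0) h with h' | h'
    · exact h'
    · exact absurd (H.hyperideal_eq_univ_of_one_mem hP.1 h') hP.2.1
  | succ m ih =>
    intro h
    rcases hP.2.2 x (H.pow x (m+1)) h with h' | h'
    · exact h'
    · exact ih h'

lemma nil_subset_prime (H : KHR R) {P : Set R} (hP : H.IsPrime P) : H.nil ⊆ P := by
  rintro x ⟨n, hn⟩
  exact H.prime_pow_mem hP n (hn ▸ hP.1.1)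

lemma zero_mem_nil (H : KHR R) : H.zero ∈ H.nil := ⟨0, H.zero_mul _⟩

lemma mem_coset_self (H : KHR R) {I : Set R} (h0 : H.zero ∈ I) (x : R) :
    x ∈ H.coset x I := by
  have hx : x ∈ H.hadd x H.zero := by
    rw [H.hadd_comm, H.zero_hadd]; rfl
  exact Set.mem_iUnion₂.2 ⟨x, rfl, Set.mem_iUnion₂.2 ⟨H.zero, h0, hx⟩⟩

lemma quot_preimage_image_eq (H : KHR R) (K : KHR Q) (q : IsQuotient H K H.nil)
    {P : Set R} (hP : H.IsPrime P) :
    q.hom.toFun ⁻¹' (q.hom.toFun '' P) = P := by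
  apply Set.Subset.antisymm
  · rintro x hx
    obtain ⟨y, hyP, hyx⟩ := hx
    have hcos : H.coset y H.nil = H.coset x H.nil := (q.fiber y x).1 hyx
    have hxmem : x ∈ H.coset y H.nil := hcos ▸ H.mem_coset_self H.zero_mem_nil x
    obtain ⟨a, ha, hb⟩ := Set.mem_iUnion₂.1 hxmem
    obtain ⟨b, hbnil, hxb⟩ := Set.mem_iUnion₂.1 hb
    have ha' : a = y := ha
    subst ha'
    exact hP.1.2.1 a hyP b (H.nil_subset_prime hP hbnil) hxb
  · exact Set.subset_preimage_image _ _

lemma goodHom_map_neg (H : KHR R) (K : KHR Q) (f : GoodHom H K) (a : R) :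
    f.toFun (H.neg a) = K.neg (f.toFun a) := by
  apply K.neg_unique
  rw [← f.map_hadd, ← f.map_zero]
  exact ⟨H.zero, H.neg_mem a, rfl⟩

lemma image_hyperideal (H : KHR R) (K : KHR Q) (f : GoodHom H K)
    (hs : Function.Surjective f.toFun) {I : Set R} (hI : H.IsHyperideal I) :
    K.IsHyperideal (f.toFun '' I) := by
  refine ⟨⟨H.zero, hI.1, f.map_zero⟩, ?_, ?_, ?_⟩
  · rintro _ ⟨a, haI, rfl⟩ _ ⟨b, hbI, rfl⟩ c hc
    rw [← f.map_hadd] at hc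
    obtain ⟨x, hx, rfl⟩ := hc
    exact ⟨x, hI.2.1 a haI b hbI hx, rfl⟩
  · rintro _ ⟨a, haI, rfl⟩
    exact ⟨H.neg a, hI.2.2.1 a haI, goodHom_map_neg H K f a⟩
  · rintro r _ ⟨a, haI, rfl⟩
    obtain ⟨s, rfl⟩ := hs r
    exact ⟨H.mul s a, hI.2.2.2 s a haI, f.map_mul s a⟩

lemma preimage_hyperideal (H : KHR R) (K : KHR Q) (f : GoodHom H K)
    {J : Set Q} (hJ : K.IsHyperideal J) : H.IsHyperideal (f.toFun ⁻¹' J) := by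
  refine ⟨?_, ?_, ?_, ?_⟩
  · show f.toFun H.zero ∈ J
    rw [f.map_zero]; exact hJ.1
  · intro a ha b hb c hc
    have : f.toFun c ∈ K.hadd (f.toFun a) (f.toFun b) := by
      rw [← f.map_hadd]; exact ⟨c, hc, rfl⟩
    exact hJ.2.1 _ ha _ hb this
  · intro a ha
    show f.toFun (H.neg a) ∈ J
    rw [goodHom_map_neg H K f a]
    exact hJ.2.2.1 _ ha
  · intro r a ha
    show f.toFun (H.mul r a) ∈ J
    rw [f.map_mul]
    exact hJ.2.2.2 _ _ ha

lemma image_prime (H : KHR R) (K : KHR Q) (q : IsQuotient H K H.nil)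
    {P : Set R} (hP : H.IsPrime P) : K.IsPrime (q.hom.toFun '' P) := by
  refine ⟨image_hyperideal H K q.hom q.surj hP.1, ?_, ?_⟩
  · intro hU
    apply hP.2.1
    apply H.hyperideal_eq_univ_of_one_mem hP.1
    have h1 : K.one ∈ q.hom.toFun '' P := by rw [hU]; trivial
    have : H.one ∈ q.hom.toFun ⁻¹' (q.hom.toFun '' P) := by
      simp only [Set.mem_preimage, q.hom.map_one]; exact h1
    rwa [quot_preimage_image_eq H K q hP] at this
  · intro a b hab
    obtain ⟨x, rfl⟩ := q.surj a
    obtain ⟨y, rfl⟩ := q.surj b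
    rw [← q.hom.map_mul] at hab
    have : H.mul x y ∈ q.hom.toFun ⁻¹' (q.hom.toFun '' P) := hab
    rw [quot_preimage_image_eq H K q hP] at this
    rcases hP.2.2 x y this with h | h
    · exact Or.inl ⟨x, h, rfl⟩
    · exact Or.inr ⟨y, h, rfl⟩

end KHR

/-- For a commutative Krasner hyperring `R` with unit, `Spec R` is
homeomorphic to `Spec (R/nil R)`, via the map on spectra induced by the projection. -/
theorem stmt6 {R Q : Type u} (H : KHR R) (K : KHR Q)
    (q : KHR.IsQuotient H K H.nil) :
    ∃ e : @Homeomorph K.Spectrum H.Spectrum K.zariski H.zariski,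
      ∀ P : K.Spectrum, e P = KHR.specMap H K q.hom P := by
  letI tK := K.zariski
  letI tH := H.zariski
  have himg : ∀ P : H.Spectrum, K.IsPrime (q.hom.toFun '' P.1) :=
    fun P => KHR.image_prime H K q P.2
  let g : H.Spectrum → K.Spectrum := fun P => ⟨q.hom.toFun '' P.1, himg P⟩
  have key : ∀ (P : H.Spectrum) (J : Set Q),
      J ⊆ q.hom.toFun '' P.1 ↔ q.hom.toFun ⁻¹' J ⊆ P.1 := by
    intro P J
    constructor
    · intro h x hx
      have hx' : x ∈ q.hom.toFun ⁻¹' (q.hom.toFun '' P.1) := h hx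
      rwa [KHR.quot_preimage_image_eq H K q P.2] at hx'
    · intro h j hj
      obtain ⟨x, rfl⟩ := q.surj j
      exact ⟨x, h hj, rfl⟩
  let e0 : K.Spectrum ≃ H.Spectrum :=
    { toFun := KHR.specMap H K q.hom
      invFun := g
      left_inv := fun P => Subtype.ext (by
        show q.hom.toFun '' (q.hom.toFun ⁻¹' P.1) = P.1
        exact Set.image_preimage_eq _ q.surj)
      right_inv := fun P => Subtype.ext (KHR.quot_preimage_image_eq H K q P.2) }
  have hc1 : @Continuous _ _ K.zariski H.zariski (KHR.specMap H K q.hom) := by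
    apply continuous_generateFrom_iff.mpr
    rintro s ⟨I, hI, rfl⟩
    have heq : (KHR.specMap H K q.hom) ⁻¹' (H.V I)ᶜ = (K.V (q.hom.toFun '' I))ᶜ := by
      ext P
      simp only [Set.mem_preimage, Set.mem_compl_iff, KHR.V, Set.mem_setOf_eq,
        KHR.specMap]
      rw [Set.image_subset_iff]
      exact Iff.rfl
    rw [heq]
    exact TopologicalSpace.isOpen_generateFrom_of_mem
      ⟨q.hom.toFun '' I, KHR.image_hyperideal H K q.hom q.surj hI, rfl⟩
  have hc2 : @Continuous _ _ H.zariski K.zariski g := by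
    apply continuous_generateFrom_iff.mpr
    rintro s ⟨J, hJ, rfl⟩
    have heq : g ⁻¹' (K.V J)ᶜ = (H.V (q.hom.toFun ⁻¹' J))ᶜ := by
      ext P
      simp only [Set.mem_preimage, Set.mem_compl_iff, KHR.V, Set.mem_setOf_eq, g]
      exact not_congr (key P J)
    rw [heq]
    exact TopologicalSpace.isOpen_generateFrom_of_mem
      ⟨q.hom.toFun ⁻¹' J, KHR.preimage_hyperideal H K q.hom hJ, rfl⟩
  exact ⟨⟨e0, hc1, hc2⟩, fun P => rfl⟩
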